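/- Let λ > 0, let w ≥ 1 be an integer, set s = λ/(1+λ), and let t₁, …, t_w ∈ (0, s]. Define T = s^{−(w−1)} · ∏_{j=1}^w t_j (so T ∈ (0, s]). Then Σ_{j=1}^w (1 − t_j)/√(t_j) ≤ (1 − T)/√T + (w−1)·(1 − s)/√s. -/

import Mathlib

lemma key_uv (u v σ : ℝ) (hu : 0 < u) (hv : 0 < v) (huσ : u ≤ σ) (hvσ : v ≤ σ)
    (hσ1 : σ < 1) :
    (1 - u^2)/u + (1 - v^2)/v ≤ (1 - (u*v/σ)^2)/(u*v/σ) + (1 - σ^2)/σ := by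
  have hσ : 0 < σ := lt_of_lt_of_le hu huσ
  have hid : (1 - (u*v/σ)^2)/(u*v/σ) + (1 - σ^2)/σ - ((1 - u^2)/u + (1 - v^2)/v)
      = (σ-u)*(σ-v)*(1-u*v)/(u*v*σ) := by
    field_simp
    ring
  have h1 : u*v < 1 := lt_of_le_of_lt (by nlinarith : u*v ≤ σ*σ) (by nlinarith)
  have h : 0 ≤ (σ-u)*(σ-v)*(1-u*v)/(u*v*σ) := div_nonneg (mul_nonneg (mul_nonneg
    (sub_nonneg.2 huσ) (sub_nonneg.2 hvσ)) (by linarith)) (by positivity)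
  linarith [hid ▸ h]

lemma twovar (s a b : ℝ) (hs1 : s < 1) (ha : a ∈ Set.Ioc 0 s) (hb : b ∈ Set.Ioc 0 s) :
    (1 - a)/Real.sqrt a + (1 - b)/Real.sqrt b ≤
      (1 - a*b/s)/Real.sqrt (a*b/s) + (1 - s)/Real.sqrt s := by
  obtain ⟨ha0, has⟩ := ha
  obtain ⟨hb0, hbs⟩ := hb
  have hs0 : 0 < s := lt_of_lt_of_le ha0 has
  have hu : 0 < Real.sqrt a := Real.sqrt_pos.2 ha0
  have hv : 0 < Real.sqrt b := Real.sqrt_pos.2 hb0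
  have hσ : 0 < Real.sqrt s := Real.sqrt_pos.2 hs0
  have hau : a = (Real.sqrt a)^2 := (Real.sq_sqrt ha0.le).symm
  have hbv : b = (Real.sqrt b)^2 := (Real.sq_sqrt hb0.le).symm
  have hsσ : s = (Real.sqrt s)^2 := (Real.sq_sqrt hs0.le).symm
  have hsq : Real.sqrt (a*b/s) = Real.sqrt a * Real.sqrt b / Real.sqrt s := by
    rw [Real.sqrt_div (by positivity), Real.sqrt_mul ha0.le]
  have habs : a*b/s = (Real.sqrt a * Real.sqrt b / Real.sqrt s)^2 := by
    rw [← hsq, Real.sq_sqrt (by positivity)]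
  calc (1 - a)/Real.sqrt a + (1 - b)/Real.sqrt b
      = (1 - (Real.sqrt a)^2)/Real.sqrt a + (1 - (Real.sqrt b)^2)/Real.sqrt b := by
        rw [← hau, ← hbv]
    _ ≤ (1 - (Real.sqrt a * Real.sqrt b / Real.sqrt s)^2)/(Real.sqrt a * Real.sqrt b / Real.sqrt s)
        + (1 - (Real.sqrt s)^2)/Real.sqrt s := key_uv _ _ _ hu hv
          (Real.sqrt_le_sqrt has) (Real.sqrt_le_sqrt hbs)
          (by nlinarith [Real.sq_sqrt hs0.le])
    _ = (1 - a*b/s)/Real.sqrt (a*b/s) + (1 - s)/Real.sqrt s := by rw [← habs, ← hsσ, hsq]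


lemma list_main (s : ℝ) (hs0 : 0 < s) (hs1 : s < 1) :
    ∀ (l : List ℝ), l ≠ [] → (∀ x ∈ l, x ∈ Set.Ioc (0:ℝ) s) →
      l.prod / s^(l.length - 1) ∈ Set.Ioc (0:ℝ) s ∧
      (l.map (fun x => (1-x)/Real.sqrt x)).sum ≤
        (1 - l.prod / s^(l.length - 1))/Real.sqrt (l.prod / s^(l.length - 1))
          + ((l.length : ℝ) - 1) * (1-s)/Real.sqrt s := by
  intro l
  induction l with
  | nil => intro h; exact absurd rfl h
  | cons a l ih =>
    intro _ hmem
    have ha := hmem a List.mem_cons_self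
    rcases eq_or_ne l [] with hl | hl
    · subst hl
      simp only [List.prod_cons, List.prod_nil, List.length_cons, List.length_nil,
        List.map_cons, List.map_nil, List.sum_cons, List.sum_nil]
      norm_num
      exact ⟨ha.1, ha.2⟩
    · have hmem' : ∀ x ∈ l, x ∈ Set.Ioc (0:ℝ) s := fun x hx => hmem x (List.mem_cons_of_mem a hx)
      obtain ⟨hT'mem, hsum⟩ := ih hl hmem'
      set T' := l.prod / s^(l.length - 1) with hT'
      have hn : 1 ≤ l.length := List.length_pos_iff.2 hl
      have hpow : s^((a::l).length - 1) = s^(l.length - 1) * s := by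
        rw [List.length_cons, Nat.add_sub_cancel]
        rw [← pow_succ]
        congr 1
        omega
      have hTeq : (a::l).prod / s^((a::l).length - 1) = a * T' / s := by
        rw [List.prod_cons, hpow, hT']
        field_simp
      have hT'0 : 0 < T' := hT'mem.1
      have hT's : T' ≤ s := hT'mem.2
      have hmemT : a * T' / s ∈ Set.Ioc (0:ℝ) s := by
        constructor
        · exact div_pos (mul_pos ha.1 hT'0) hs0
        · calc a * T' / s ≤ s * T' / s := by gcongr; exact ha.2
            _ = T' := by field_simp
            _ ≤ s := hT's
      have hkey := twovar s a T' hs1 ha hT'mem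
      refine ⟨hTeq ▸ hmemT, ?_⟩
      rw [hTeq]
      have hcast : ((((a::l).length : ℕ) : ℝ) - 1) = (l.length : ℝ) := by
        rw [List.length_cons]; push_cast; ring
      rw [hcast]
      rw [List.map_cons, List.sum_cons]
      have hs' : 0 < Real.sqrt s := Real.sqrt_pos.2 hs0
      have expand : (l.length : ℝ) * (1-s)/Real.sqrt s
          = ((l.length : ℝ) - 1) * (1-s)/Real.sqrt s + (1-s)/Real.sqrt s := by
        field_simp; ring
      rw [expand]
      linarith


theorem stmt_8 (lam : ℝ) (hlam : 0 < lam) (w : ℕ) (hw : 1 ≤ w)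
    (t : Fin w → ℝ) (ht : ∀ j, t j ∈ Set.Ioc (0 : ℝ) (lam / (1 + lam)))
    (T : ℝ) (hT : T = (∏ j, t j) / (lam / (1 + lam)) ^ (w - 1)) :
    T ∈ Set.Ioc (0 : ℝ) (lam / (1 + lam)) ∧
    ∑ j, (1 - t j) / Real.sqrt (t j) ≤
      (1 - T) / Real.sqrt T +
        ((w : ℝ) - 1) * (1 - lam / (1 + lam)) / Real.sqrt (lam / (1 + lam)) := by
  set s := lam / (1 + lam) with hs
  have hs0 : 0 < s := div_pos hlam (by linarith)
  have hs1 : s < 1 := (div_lt_one (by linarith)).2 (by linarith)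
  have hne : List.ofFn t ≠ [] := by
    simp only [ne_eq, List.ofFn_eq_nil_iff]
    omega
  have hmem : ∀ x ∈ List.ofFn t, x ∈ Set.Ioc (0:ℝ) s := by
    intro x hx
    obtain ⟨j, rfl⟩ := List.mem_ofFn.1 hx
    exact ht j
  obtain ⟨h1, h2⟩ := list_main s hs0 hs1 (List.ofFn t) hne hmem
  have hprod : (List.ofFn t).prod = ∏ j, t j := List.prod_ofFn
  have hlen : (List.ofFn t).length = w := List.length_ofFn
  have hTeq : (List.ofFn t).prod / s ^ ((List.ofFn t).length - 1) = T := by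
    rw [hprod, hlen, hT]
  have hsum : ((List.ofFn t).map (fun x => (1-x)/Real.sqrt x)).sum
      = ∑ j, (1 - t j) / Real.sqrt (t j) := by
    rw [List.map_ofFn, List.sum_ofFn]
    rfl
  rw [hTeq] at h1 h2
  rw [hsum, hlen] at h2
  exact ⟨h1, h2⟩
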